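/- For all functions w ∈ C^1([a,b]) with w(a) = 0, the Hardy inequality ∫_a^b (w(x)/(x-a))^2 dx ≤ 4 ∫_a^b (w'(x))^2 dx holds. -/

import Mathlib

open Set MeasureTheory intervalIntegral

/-- **Hardy inequality on an interval.** For every `w ∈ C¹([a,b])` with `w a = 0`,
`∫_a^b (w x / (x-a))² dx ≤ 4 ∫_a^b (w' x)² dx`. -/
theorem hardy_inequality_interval (a b : ℝ) (hab : a < b) (w w' : ℝ → ℝ)
    (hderiv : ∀ x ∈ Set.Icc a b, HasDerivAt w (w' x) x)
    (hcont : ContinuousOn w' (Set.Icc a b))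
    (hwa : w a = 0) :
    (∫ x in a..b, (w x / (x - a)) ^ 2) ≤ 4 * ∫ x in a..b, (w' x) ^ 2 := by
  set J := ∫ x in a..b, (w' x) ^ 2 with hJ
  have hwc : ContinuousOn w (Set.Icc a b) := fun x hx =>
    (hderiv x hx).continuousAt.continuousWithinAt
  -- bound on w'
  obtain ⟨M, hM0, hM⟩ : ∃ M, 0 ≤ M ∧ ∀ x ∈ Set.Icc a b, |w' x| ≤ M := by
    obtain ⟨C, hC⟩ := isCompact_Icc.exists_bound_of_continuousOn hcont
    exact ⟨max C 0, le_max_right _ _, fun x hx =>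
      (Real.norm_eq_abs (w' x) ▸ hC x hx).trans (le_max_left _ _)⟩
  -- bound on w
  have hwb : ∀ x ∈ Set.Icc a b, |w x| ≤ M * (x - a) := by
    intro x hx
    have hsub : Set.uIcc a x ⊆ Set.Icc a b := by
      rw [Set.uIcc_of_le hx.1]; exact Set.Icc_subset_Icc le_rfl hx.2
    have hint : IntervalIntegrable w' volume a x :=
      (hcont.mono hsub).intervalIntegrable
    have hftc : ∫ t in a..x, w' t = w x - w a :=
      integral_eq_sub_of_hasDerivAt (fun t ht => hderiv t (hsub ht)) hint
    have hb2 : ‖∫ t in a..x, w' t‖ ≤ M * |x - a| :=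
      intervalIntegral.norm_integral_le_of_norm_le_const fun t ht => by
        have : t ∈ Set.Icc a b := hsub (Set.uIoc_subset_uIcc ht)
        simpa using hM t this
    rw [hftc, hwa, sub_zero] at hb2
    rwa [Real.norm_eq_abs, abs_of_nonneg (by linarith [hx.1] : (0:ℝ) ≤ x - a)] at hb2
  -- bound on the quotient
  have hub : ∀ x ∈ Set.Ioc a b, |w x / (x - a)| ≤ M := by
    intro x hx
    have hxa : 0 < x - a := by linarith [hx.1]
    rw [abs_div, abs_of_pos hxa, div_le_iff₀ hxa]
    exact hwb x ⟨hx.1.le, hx.2⟩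
  -- integrability of the quotient squared on (a, b]
  have huc : ContinuousOn (fun x => (w x / (x - a)) ^ 2) (Set.Ioc a b) := by
    apply ContinuousOn.pow
    apply ContinuousOn.div (hwc.mono Set.Ioc_subset_Icc_self)
      ((continuous_id.sub continuous_const).continuousOn)
    intro x hx
    have h1 : 0 < x - a := by linarith [hx.1]
    simpa using ne_of_gt h1
  have huI : IntegrableOn (fun x => (w x / (x - a)) ^ 2) (Set.Ioc a b) volume := by
    refine ⟨huc.aestronglyMeasurable measurableSet_Ioc, ?_⟩
    apply HasFiniteIntegral.restrict_of_bounded (C := M ^ 2) measure_Ioc_lt_top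
    filter_upwards [ae_restrict_mem measurableSet_Ioc] with x hx
    have := hub x hx
    rw [Real.norm_eq_abs, abs_of_nonneg (sq_nonneg _)]
    calc (w x / (x - a)) ^ 2 = |w x / (x - a)| ^ 2 := (sq_abs _).symm
      _ ≤ M ^ 2 := by nlinarith [abs_nonneg (w x / (x - a))]
  have huII : IntervalIntegrable (fun x => (w x / (x - a)) ^ 2) volume a b :=
    (intervalIntegrable_iff_integrableOn_Ioc_of_le hab.le).mpr huI
  -- key estimate on [c, b]
  have key : ∀ c ∈ Set.Ioc a b,
      (∫ x in c..b, (w x / (x - a)) ^ 2) ≤ 4 * J + 2 * (M ^ 2 * (c - a)) := by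
    intro c hc
    have hca : 0 < c - a := by linarith [hc.1]
    have hcb : c ≤ b := hc.2
    have hsub : Set.Icc c b ⊆ Set.Icc a b := Set.Icc_subset_Icc hc.1.le le_rfl
    -- derivative of h x = w x ^ 2 / (x - a)
    set D : ℝ → ℝ := fun x => (2 * w x * w' x * (x - a) - w x ^ 2) / (x - a) ^ 2 with hD
    have hDd : ∀ x ∈ Set.uIcc c b, HasDerivAt (fun x => w x ^ 2 / (x - a)) (D x) x := by
      intro x hx
      rw [Set.uIcc_of_le hcb] at hx
      have hxa : x - a ≠ 0 := ne_of_gt (by linarith [hx.1])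
      have h1 : HasDerivAt (fun x => w x ^ 2) (2 * w x * w' x) x := by
        have := (hderiv x (hsub hx)).pow 2
        simp [mul_comm, mul_assoc, mul_left_comm] at this ⊢; exact this
      have h2 : HasDerivAt (fun x : ℝ => x - a) 1 x := (hasDerivAt_id x).sub_const a
      have := h1.div h2 hxa
      simp [hD, mul_comm] at this ⊢; exact this
    have hwcC : ContinuousOn w (Set.Icc c b) := hwc.mono hsub
    have hDc : ContinuousOn D (Set.Icc c b) := by
      apply ContinuousOn.div
      · exact ((continuousOn_const.mul hwcC).mul (hcont.mono hsub)).mul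
          ((continuous_id.sub continuous_const).continuousOn) |>.sub (hwcC.pow 2)
      · exact ((continuous_id.sub continuous_const).continuousOn).pow 2
      · intro x hx
        have : (0:ℝ) < x - a := by linarith [hx.1]
        positivity
    have hDI : IntervalIntegrable D volume c b := by
      rw [intervalIntegrable_iff_integrableOn_Icc_of_le hcb]
      exact hDc.integrableOn_compact isCompact_Icc
    have hftc : ∫ x in c..b, D x = w b ^ 2 / (b - a) - w c ^ 2 / (c - a) :=
      integral_eq_sub_of_hasDerivAt hDd hDI
    -- pointwise bound: D x ≤ -(1/2) (w x/(x-a))² + 2 (w' x)²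
    have hpt : ∀ x ∈ Set.Icc c b,
        D x ≤ -(1/2) * (w x / (x - a)) ^ 2 + 2 * (w' x) ^ 2 := by
      intro x hx
      have hxa : 0 < x - a := by linarith [hx.1]
      have hDx : D x = 2 * (w x / (x - a)) * w' x - (w x / (x - a)) ^ 2 := by
        simp only [hD]; field_simp [hxa.ne']
      rw [hDx]
      nlinarith [sq_nonneg (w x / (x - a) - 2 * w' x)]
    -- integrability of the RHS pieces on [c,b]
    have hucC : ContinuousOn (fun x => (w x / (x - a)) ^ 2) (Set.Icc c b) :=
      huc.mono (fun x hx => ⟨by linarith [hx.1], hx.2⟩)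
    have huIc : IntervalIntegrable (fun x => (w x / (x - a)) ^ 2) volume c b := by
      rw [intervalIntegrable_iff_integrableOn_Icc_of_le hcb]
      exact hucC.integrableOn_compact isCompact_Icc
    have hvIc : IntervalIntegrable (fun x => (w' x) ^ 2) volume c b :=
      (((hcont.mono hsub).pow 2).mono (by rw [Set.uIcc_of_le hcb])).intervalIntegrable
    have hvIa : IntervalIntegrable (fun x => (w' x) ^ 2) volume a b :=
      ((hcont.pow 2).mono (by rw [Set.uIcc_of_le hab.le])).intervalIntegrable
    have hmono : ∫ x in c..b, D x ≤
        ∫ x in c..b, (-(1/2) * (w x / (x - a)) ^ 2 + 2 * (w' x) ^ 2) :=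
      intervalIntegral.integral_mono_on hcb hDI
        ((huIc.const_mul _).add (hvIc.const_mul _)) hpt
    rw [intervalIntegral.integral_add (huIc.const_mul _) (hvIc.const_mul _),
      intervalIntegral.integral_const_mul, intervalIntegral.integral_const_mul] at hmono
    rw [hftc] at hmono
    -- boundary terms
    have hb0 : 0 ≤ w b ^ 2 / (b - a) := div_nonneg (sq_nonneg _) (by linarith)
    have hc0 : w c ^ 2 / (c - a) ≤ M ^ 2 * (c - a) := by
      rw [div_le_iff₀ hca]
      have := hwb c ⟨hc.1.le, hc.2⟩
      nlinarith [abs_nonneg (w c), sq_abs (w c)]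
    -- tail of J
    have hJtail : (∫ x in c..b, (w' x) ^ 2) ≤ J := by
      have hss : Set.uIcc a c ⊆ Set.uIcc a b := by
        rw [Set.uIcc_of_le hc.1.le, Set.uIcc_of_le hab.le]
        exact Set.Icc_subset_Icc le_rfl hcb
      have hsplit : (∫ x in a..c, (w' x) ^ 2) + (∫ x in c..b, (w' x) ^ 2) = J :=
        intervalIntegral.integral_add_adjacent_intervals (hvIa.mono_set hss) hvIc
      have h0 : 0 ≤ ∫ x in a..c, (w' x) ^ 2 :=
        intervalIntegral.integral_nonneg hc.1.le (fun x _ => sq_nonneg _)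
      linarith
    linarith
  -- conclude by letting c → a
  refine le_of_forall_pos_le_add fun ε hε => ?_
  set c := a + min (ε / (3 * M ^ 2 + 1)) (b - a) with hcdef
  have hmpos : 0 < min (ε / (3 * M ^ 2 + 1)) (b - a) := by
    apply lt_min
    · positivity
    · linarith
  have hcmem : c ∈ Set.Ioc a b := by
    constructor
    · simp only [hcdef]; linarith
    · simp only [hcdef]; have := min_le_right (ε / (3 * M ^ 2 + 1)) (b - a); linarith
  have hss1 : Set.uIcc a c ⊆ Set.uIcc a b := by
    rw [Set.uIcc_of_le hcmem.1.le, Set.uIcc_of_le hab.le]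
    exact Set.Icc_subset_Icc le_rfl hcmem.2
  have hss2 : Set.uIcc c b ⊆ Set.uIcc a b := by
    rw [Set.uIcc_of_le hcmem.2, Set.uIcc_of_le hab.le]
    exact Set.Icc_subset_Icc hcmem.1.le le_rfl
  have hsplit : (∫ x in a..c, (w x / (x - a)) ^ 2) + (∫ x in c..b, (w x / (x - a)) ^ 2)
      = ∫ x in a..b, (w x / (x - a)) ^ 2 :=
    intervalIntegral.integral_add_adjacent_intervals
      (huII.mono_set hss1) (huII.mono_set hss2)
  have hhead : (∫ x in a..c, (w x / (x - a)) ^ 2) ≤ M ^ 2 * (c - a) := by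
    have := intervalIntegral.norm_integral_le_of_norm_le_const (C := M ^ 2)
      (f := fun x => (w x / (x - a)) ^ 2) (a := a) (b := c) (fun x hx => by
        rw [Set.uIoc_of_le hcmem.1.le] at hx
        have hx' : x ∈ Set.Ioc a b := ⟨hx.1, hx.2.trans hcmem.2⟩
        have := hub x hx'
        rw [Real.norm_eq_abs, abs_of_nonneg (sq_nonneg _)]
        calc (w x / (x - a)) ^ 2 = |w x / (x - a)| ^ 2 := (sq_abs _).symm
          _ ≤ M ^ 2 := by nlinarith [abs_nonneg (w x / (x - a))])
    have h2 := (le_abs_self _).trans (Real.norm_eq_abs _ ▸ this)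
    rwa [abs_of_nonneg (by linarith [hcmem.1] : (0:ℝ) ≤ c - a)] at h2
  have hkey := key c hcmem
  have hcab : c - a ≤ ε / (3 * M ^ 2 + 1) := by
    simp only [hcdef, add_sub_cancel_left]; exact min_le_left _ _
  have hfin : 3 * (M ^ 2 * (c - a)) ≤ ε := by
    have h1 : (3 * M ^ 2) * (c - a) ≤ (3 * M ^ 2 + 1) * (ε / (3 * M ^ 2 + 1)) := by
      apply mul_le_mul (by linarith) hcab (by linarith [hcmem.1]) (by positivity)
    rw [mul_div_cancel₀ _ (by positivity : (3 * M ^ 2 + 1 : ℝ) ≠ 0)] at h1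
    linarith
  clear_value c J
  linarith
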